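/- For P, Q ∈ Γ_n with 0 < r ≤ p_i/q_i ≤ R for all i, the relative arithmetic-geometric divergence G(P||Q) = ∑((p_i+q_i)/2)ln((p_i+q_i)/(2p_i)) satisfies ((R+1)²/(16R²))·Δ(P||Q) ≤ G(P||Q) ≤ ((r+1)²/(16r²))·Δ(P||Q), where Δ(P||Q) = ∑(p_i - q_i)²/(p_i + q_i). -/

import Mathlib

open Finset Real Set

noncomputable def phiF (x : ℝ) : ℝ := (x+1)/2 * Real.log ((x+1)/(2*x)) + (x-1)/2
noncomputable def phiF' (x : ℝ) : ℝ := (1/2) * Real.log ((x+1)/(2*x)) + 1 - (x+1)/(2*x)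
noncomputable def ggF (x : ℝ) : ℝ := (x-1)^2/(x+1)
noncomputable def ggF' (x : ℝ) : ℝ := (x-1)*(x+3)/(x+1)^2

lemma hasDeriv_log_aux {x : ℝ} (hx : 0 < x) :
    HasDerivAt (fun y => Real.log ((y+1)/(2*y))) (-(1/(x*(x+1)))) x := by
  have h1 : HasDerivAt (fun y : ℝ => (y+1)/(2*y)) (-(1/(2*x^2))) x := by
    have hnum : HasDerivAt (fun y : ℝ => y + 1) 1 x := (hasDerivAt_id x).add_const 1
    have hden : HasDerivAt (fun y : ℝ => 2*y) 2 x := by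
      simpa using (hasDerivAt_id x).const_mul 2
    have := hnum.div hden (by positivity)
    refine this.congr_deriv ?_
    field_simp
    ring
  have hne : (x+1)/(2*x) ≠ 0 := by positivity
  have := h1.log hne
  convert this using 1
  field_simp

lemma hphi {x : ℝ} (hx : 0 < x) : HasDerivAt phiF (phiF' x) x := by
  have h1 : HasDerivAt (fun y : ℝ => (y+1)/2) (1/2) x := by
    simpa using ((hasDerivAt_id x).add_const 1).div_const 2
  have h2 := hasDeriv_log_aux hx
  have h3 : HasDerivAt (fun y : ℝ => (y-1)/2) (1/2) x := by
    simpa using ((hasDerivAt_id x).sub_const 1).div_const 2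
  have := (h1.mul h2).add h3
  refine this.congr_deriv ?_
  unfold phiF'
  set L := Real.log ((x+1)/(2*x)) with hL
  field_simp
  ring

lemma hphi' {x : ℝ} (hx : 0 < x) : HasDerivAt phiF' (1/(2*x^2*(x+1))) x := by
  have h2 := (hasDeriv_log_aux hx).const_mul (1/2 : ℝ)
  have h4 : HasDerivAt (fun y : ℝ => (y+1)/(2*y)) (-(1/(2*x^2))) x := by
    have hnum : HasDerivAt (fun y : ℝ => y + 1) 1 x := (hasDerivAt_id x).add_const 1
    have hden : HasDerivAt (fun y : ℝ => 2*y) 2 x := by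
      simpa using (hasDerivAt_id x).const_mul 2
    have := hnum.div hden (by positivity)
    refine this.congr_deriv ?_
    field_simp
    ring
  have := (h2.add_const 1).sub h4
  refine this.congr_deriv ?_
  field_simp
  ring

lemma hgg {x : ℝ} (hx : 0 < x) : HasDerivAt ggF (ggF' x) x := by
  have hnum : HasDerivAt (fun y : ℝ => (y-1)^2) (2*(x-1)) x := by
    simpa using ((hasDerivAt_id x).sub_const 1).fun_pow 2
  have hden : HasDerivAt (fun y : ℝ => y + 1) 1 x := (hasDerivAt_id x).add_const 1
  have := hnum.div hden (by positivity)
  refine this.congr_deriv ?_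
  unfold ggF'
  field_simp
  ring

lemma hgg' {x : ℝ} (hx : 0 < x) : HasDerivAt ggF' (8/(x+1)^3) x := by
  have hnum : HasDerivAt (fun y : ℝ => (y-1)*(y+3)) ((x-1) + (x+3)) x := by
    have := ((hasDerivAt_id' x).sub_const 1).mul ((hasDerivAt_id' x).add_const 3)
    refine this.congr_deriv ?_
    ring
  have hden : HasDerivAt (fun y : ℝ => (y+1)^2) (2*(x+1)) x := by
    simpa using ((hasDerivAt_id x).add_const 1).fun_pow 2
  have := hnum.div hden (by positivity)
  refine this.congr_deriv ?_
  field_simp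
  ring

lemma tangent_nonneg (f f' f'' : ℝ → ℝ) (s : Set ℝ) (hs : Convex ℝ s) (h1 : (1:ℝ) ∈ s)
    (hf : ∀ x ∈ s, HasDerivAt f (f' x) x)
    (hf' : ∀ x ∈ s, HasDerivAt f' (f'' x) x)
    (hpos : ∀ x ∈ interior s, 0 < f'' x)
    (hd1 : f' 1 = 0) (hv1 : f 1 = 0) :
    ∀ x ∈ s, 0 ≤ f x := by
  have hmono : StrictMonoOn f' s := by
    apply strictMonoOn_of_deriv_pos hs
    · exact fun x hx => (hf' x hx).continuousAt.continuousWithinAt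
    · intro x hx
      rw [(hf' x (interior_subset hx)).deriv]
      exact hpos x hx
  intro x hx
  rcases le_total 1 x with h | h
  · have hmo : MonotoneOn f (s ∩ Ici 1) := by
      apply monotoneOn_of_deriv_nonneg (hs.inter (convex_Ici 1))
        (fun y hy => (hf y hy.1).continuousAt.continuousWithinAt)
      · intro y hy
        rw [interior_inter, interior_Ici] at hy
        exact ((hf y (interior_subset hy.1)).differentiableAt).differentiableWithinAt
      · intro y hy
        rw [interior_inter, interior_Ici] at hy
        have hys : y ∈ s := interior_subset hy.1
        rw [(hf y hys).deriv]
        have := hmono h1 hys hy.2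
        linarith [hd1 ▸ this]
    have := hmo ⟨h1, Set.self_mem_Ici⟩ ⟨hx, h⟩ h
    simpa [hv1] using this
  · have hmo : AntitoneOn f (s ∩ Iic 1) := by
      apply antitoneOn_of_deriv_nonpos (hs.inter (convex_Iic 1))
        (fun y hy => (hf y hy.1).continuousAt.continuousWithinAt)
      · intro y hy
        rw [interior_inter, interior_Iic] at hy
        exact ((hf y (interior_subset hy.1)).differentiableAt).differentiableWithinAt
      · intro y hy
        rw [interior_inter, interior_Iic] at hy
        have hys : y ∈ s := interior_subset hy.1
        rw [(hf y hys).deriv]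
        have := hmono hys h1 hy.2
        linarith [hd1 ▸ this]
    have := hmo ⟨hx, h⟩ ⟨h1, Set.self_mem_Iic⟩ h
    simpa [hv1] using this

lemma phiF'_one : phiF' 1 = 0 := by
  unfold phiF'
  norm_num

lemma phiF_one : phiF 1 = 0 := by
  unfold phiF
  norm_num

lemma lower_core {R : ℝ} (hR : 1 ≤ R) {x : ℝ} (hx : 0 < x) (hxR : x ≤ R) :
    (R+1)^2/(16*R^2) * ggF x ≤ phiF x := by
  have hR0 : (0:ℝ) < R := by linarith
  set c := (R+1)^2/(16*R^2) with hc
  have key := tangent_nonneg (fun y => phiF y - c * ggF y) (fun y => phiF' y - c * ggF' y)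
    (fun y => 1/(2*y^2*(y+1)) - c * (8/(y+1)^3)) (Ioc 0 R) (convex_Ioc 0 R)
    ⟨one_pos, hR⟩
    (fun y hy => (hphi hy.1).sub ((hgg hy.1).const_mul c))
    (fun y hy => (hphi' hy.1).sub ((hgg' hy.1).const_mul c))
    ?_ ?_ ?_ x ⟨hx, hxR⟩
  · have key' : 0 ≤ phiF x - c * ggF x := key
    linarith
  · intro y hy
    rw [interior_Ioc] at hy
    obtain ⟨hy0, hyR⟩ := hy
    show (0:ℝ) < 1/(2*y^2*(y+1)) - c * (8/(y+1)^3)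
    have h1 : c * (8/(y+1)^3) = (R+1)^2/(2*R^2*(y+1)^3) := by
      rw [hc]; field_simp; ring
    rw [h1]
    rw [sub_pos, div_lt_div_iff₀ (by positivity) (by positivity)]
    have hfac : 0 < (R - y) * (2*R*y + R + y) := by
      apply mul_pos (by linarith)
      nlinarith
    nlinarith [mul_pos (mul_pos two_pos (show (0:ℝ) < y + 1 by linarith)) hfac]
  · simp [phiF'_one, ggF']
  · simp [phiF_one, ggF]

lemma upper_core {r : ℝ} (hr : 0 < r) (hr1 : r ≤ 1) {x : ℝ} (hx : r ≤ x) :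
    phiF x ≤ (r+1)^2/(16*r^2) * ggF x := by
  set c := (r+1)^2/(16*r^2) with hc
  have key := tangent_nonneg (fun y => c * ggF y - phiF y) (fun y => c * ggF' y - phiF' y)
    (fun y => c * (8/(y+1)^3) - 1/(2*y^2*(y+1))) (Ici r) (convex_Ici r)
    hr1
    (fun y hy => ((hgg (lt_of_lt_of_le hr hy)).const_mul c).sub (hphi (lt_of_lt_of_le hr hy)))
    (fun y hy => ((hgg' (lt_of_lt_of_le hr hy)).const_mul c).sub (hphi' (lt_of_lt_of_le hr hy)))
    ?_ ?_ ?_ x hx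
  · have key' : 0 ≤ c * ggF x - phiF x := key
    linarith
  · intro y hy
    rw [interior_Ici] at hy
    have hyr : r < y := hy
    have hy0 : 0 < y := lt_trans hr hyr
    show (0:ℝ) < c * (8/(y+1)^3) - 1/(2*y^2*(y+1))
    have h1 : c * (8/(y+1)^3) = (r+1)^2/(2*r^2*(y+1)^3) := by
      rw [hc]; field_simp; ring
    rw [h1]
    rw [sub_pos, div_lt_div_iff₀ (by positivity) (by positivity)]
    have hfac : 0 < (y - r) * (2*r*y + r + y) := by
      apply mul_pos (by linarith)
      nlinarith
    nlinarith [mul_pos (mul_pos two_pos (show (0:ℝ) < y + 1 by linarith)) hfac]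
  · simp [phiF'_one, ggF']
  · simp [phiF_one, ggF]

lemma scaled_phi {p q : ℝ} (hp : 0 < p) (hq : 0 < q) :
    q * phiF (p/q) = (p+q)/2 * Real.log ((p+q)/(2*p)) + (p-q)/2 := by
  have harg : (p/q+1)/(2*(p/q)) = (p+q)/(2*p) := by
    field_simp
  unfold phiF
  rw [harg]
  set L := Real.log ((p+q)/(2*p)) with hL
  field_simp

lemma scaled_gg {p q : ℝ} (hp : 0 < p) (hq : 0 < q) :
    q * ggF (p/q) = (p-q)^2/(p+q) := by
  unfold ggF
  have hq' : q ≠ 0 := ne_of_gt hq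
  have hpq : p + q ≠ 0 := by positivity
  field_simp

theorem stmt13 (n : ℕ) (p q : Fin n → ℝ)
    (hp : ∀ i, 0 < p i) (hq : ∀ i, 0 < q i)
    (hp1 : ∑ i, p i = 1) (hq1 : ∑ i, q i = 1)
    (r R : ℝ) (hr : 0 < r) (hrR : ∀ i, r ≤ p i / q i ∧ p i / q i ≤ R) :
    ((R+1)^2/(16*R^2)) * (∑ i, (p i - q i)^2 / (p i + q i)) ≤ (∑ i, ((p i + q i)/2) * Real.log ((p i + q i) / (2 * p i))) ∧ (∑ i, ((p i + q i)/2) * Real.log ((p i + q i) / (2 * p i))) ≤ ((r+1)^2/(16*r^2)) * (∑ i, (p i - q i)^2 / (p i + q i)) := by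
  have hn : (Finset.univ : Finset (Fin n)).Nonempty := by
    rcases Nat.eq_zero_or_pos n with h | h
    · subst h; simp at hp1
    · exact ⟨⟨0, h⟩, Finset.mem_univ _⟩
  have hr1 : r ≤ 1 := by
    by_contra hcon
    push_neg at hcon
    have hlt : ∀ i ∈ Finset.univ, q i < p i := by
      intro i _
      have h1 := (hrR i).1
      have hqi := hq i
      rw [le_div_iff₀ hqi] at h1
      nlinarith
    have := Finset.sum_lt_sum_of_nonempty hn hlt
    rw [hp1, hq1] at this
    linarith
  have hR1 : 1 ≤ R := by
    by_contra hcon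
    push_neg at hcon
    have hlt : ∀ i ∈ Finset.univ, p i < q i := by
      intro i _
      have h1 := (hrR i).2
      have hqi := hq i
      rw [div_le_iff₀ hqi] at h1
      nlinarith
    have := Finset.sum_lt_sum_of_nonempty hn hlt
    rw [hp1, hq1] at this
    linarith
  set α := (R+1)^2/(16*R^2) with ha
  set β := (r+1)^2/(16*r^2) with hb
  have hterm : ∀ i, α * ((p i - q i)^2/(p i + q i)) ≤
      (p i + q i)/2 * Real.log ((p i + q i)/(2 * p i)) + (p i - q i)/2 ∧
      (p i + q i)/2 * Real.log ((p i + q i)/(2 * p i)) + (p i - q i)/2 ≤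
      β * ((p i - q i)^2/(p i + q i)) := by
    intro i
    have hpi := hp i
    have hqi := hq i
    have hx0 : 0 < p i / q i := div_pos hpi hqi
    have hlow := lower_core hR1 hx0 (hrR i).2
    have hupp := upper_core hr hr1 (hrR i).1
    have h1 := mul_le_mul_of_nonneg_left hlow (le_of_lt hqi)
    have h2 := mul_le_mul_of_nonneg_left hupp (le_of_lt hqi)
    rw [scaled_phi hpi hqi] at h1 h2
    have hgeq : q i * ggF (p i / q i) = (p i - q i)^2/(p i + q i) := scaled_gg hpi hqi
    constructor
    · have heq : α * ((p i - q i)^2/(p i + q i)) = q i * (α * ggF (p i / q i)) := by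
        rw [← hgeq]; ring
      linarith
    · have heq : β * ((p i - q i)^2/(p i + q i)) = q i * (β * ggF (p i / q i)) := by
        rw [← hgeq]; ring
      linarith
  have hsum0 : ∑ i, (p i - q i)/2 = (0:ℝ) := by
    rw [← Finset.sum_div, Finset.sum_sub_distrib, hp1, hq1]
    norm_num
  have hA : ∑ i, ((p i + q i)/2 * Real.log ((p i + q i)/(2 * p i)) + (p i - q i)/2)
      = ∑ i, (p i + q i)/2 * Real.log ((p i + q i)/(2 * p i)) := by
    rw [Finset.sum_add_distrib, hsum0, add_zero]
  constructor
  · have := Finset.sum_le_sum (fun i (_ : i ∈ Finset.univ) => (hterm i).1)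
    rw [hA] at this
    calc α * (∑ i, (p i - q i)^2/(p i + q i)) = ∑ i, α * ((p i - q i)^2/(p i + q i)) := by
          rw [Finset.mul_sum]
      _ ≤ _ := this
  · have := Finset.sum_le_sum (fun i (_ : i ∈ Finset.univ) => (hterm i).2)
    rw [hA] at this
    calc ∑ i, (p i + q i)/2 * Real.log ((p i + q i)/(2 * p i))
        ≤ ∑ i, β * ((p i - q i)^2/(p i + q i)) := this
      _ = β * (∑ i, (p i - q i)^2/(p i + q i)) := by rw [Finset.mul_sum]
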